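/- arXiv:1107.4466 — 4 statements merged into one kernel-verified Lean document; each statement's English description precedes it below -/
import Mathlib

section
/- For any square matrix A over a commutative ring R of size n×n, the hafnian of the 2n×2n block matrix [[0, A],[Aᵀ, 0]] equals the permanent of A. -/
open scoped Classical
open Matrix

/-- The hafnian of an `m × m` matrix: the sum over all perfect matchings of
`{0,…,m-1}` (encoded as fixed-point-free involutions) of the product of the
entries over the matched pairs. (If `m` is odd there are no such matchings.) -/
noncomputable def hafnian {R : Type*} [CommRing R] {m : ℕ}
    (B : Matrix (Fin m) (Fin m) R) : R :=
  ∑ σ ∈ Finset.univ.filter (fun σ : Equiv.Perm (Fin m) => σ * σ = 1 ∧ ∀ i, σ i ≠ i),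
    ∏ i ∈ Finset.univ.filter (fun i : Fin m => (i : ℕ) < (σ i : ℕ)), B i (σ i)

section aux
variable {R : Type*} [CommRing R] {n : ℕ}

/-- the involution associated to a permutation -/
def FF (π : Equiv.Perm (Fin n)) : Equiv.Perm (Fin (n + n)) :=
  finSumFinEquiv.permCongr
    (((π : Fin n ≃ Fin n).sumCongr (π⁻¹ : Equiv.Perm (Fin n))).trans (Equiv.sumComm _ _))

lemma FF_castAdd (π : Equiv.Perm (Fin n)) (i : Fin n) :
    FF π (Fin.castAdd n i) = Fin.natAdd n (π i) := by
  have h1 : finSumFinEquiv.symm (Fin.castAdd n i) = Sum.inl i :=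
    finSumFinEquiv_symm_apply_castAdd i
  rw [FF, Equiv.permCongr_apply, h1, ← finSumFinEquiv_apply_right]
  rfl

lemma FF_natAdd (π : Equiv.Perm (Fin n)) (j : Fin n) :
    FF π (Fin.natAdd n j) = Fin.castAdd n (π⁻¹ j) := by
  have h1 : finSumFinEquiv.symm (Fin.natAdd n j) = Sum.inr j :=
    finSumFinEquiv_symm_apply_natAdd j
  rw [FF, Equiv.permCongr_apply, h1, ← finSumFinEquiv_apply_left]
  rfl

lemma permanent_eq_sum (A : Matrix (Fin n) (Fin n) R) :
    A.permanent = ∑ σ : Equiv.Perm (Fin n), ∏ i, A i (σ i) := by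
  rw [← Matrix.permanent_transpose]
  simp [Matrix.permanent, Matrix.transpose_apply]

end aux

/-- The hafnian of the block matrix `[[0, A],[Aᵀ, 0]]` equals the permanent of `A`. -/
theorem hafnian_fromBlocks_eq_permanent {R : Type*} [CommRing R] {n : ℕ}
    (A : Matrix (Fin n) (Fin n) R) :
    hafnian ((Matrix.fromBlocks 0 A Aᵀ 0).submatrix finSumFinEquiv.symm finSumFinEquiv.symm)
      = A.permanent := by
  classical
  set B := (Matrix.fromBlocks 0 A Aᵀ 0).submatrix finSumFinEquiv.symm finSumFinEquiv.symm with hB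
  have hBll : ∀ (a b : Fin (n+n)), (a : ℕ) < n → (b : ℕ) < n → B a b = 0 := by
    intro a b ha hb
    obtain ⟨x, rfl⟩ := finSumFinEquiv.surjective a
    obtain ⟨y, rfl⟩ := finSumFinEquiv.surjective b
    rcases x with i | i
    · rcases y with j | j
      · rw [hB, Matrix.submatrix_apply, Equiv.symm_apply_apply, Equiv.symm_apply_apply,
          Matrix.fromBlocks_apply₁₁]
        rfl
      · exfalso
        rw [finSumFinEquiv_apply_right, Fin.coe_natAdd] at hb
        omega
    · exfalso
      rw [finSumFinEquiv_apply_right, Fin.coe_natAdd] at ha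
      omega
  have hBlr : ∀ (i j : Fin n), B (Fin.castAdd n i) (Fin.natAdd n j) = A i j := by
    intro i j
    rw [hB, Matrix.submatrix_apply, finSumFinEquiv_symm_apply_castAdd,
      finSumFinEquiv_symm_apply_natAdd, Matrix.fromBlocks_apply₁₂]
  rw [hafnian, permanent_eq_sum]
  -- restrict to "crossing" involutions
  set P : Equiv.Perm (Fin (n+n)) → Prop :=
    fun σ => ∀ i : Fin (n+n), (i : ℕ) < n → n ≤ ((σ i : Fin (n+n)) : ℕ) with hP
  rw [← Finset.sum_subset (s₁ := Finset.univ.filter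
      (fun σ : Equiv.Perm (Fin (n+n)) => (σ * σ = 1 ∧ ∀ i, σ i ≠ i) ∧ P σ))
      (by intro σ hσ; simp only [Finset.mem_filter] at *; exact ⟨hσ.1, hσ.2.1⟩)
      ?_]
  · -- the bijection
    refine (Finset.sum_bij (fun π _ => FF π) ?_ ?_ ?_ ?_).symm
    · intro π _
      have hmul : FF π * FF π = 1 := by
        apply Equiv.ext
        intro x
        obtain ⟨y, rfl⟩ := finSumFinEquiv.surjective x
        rcases y with i | j
        · rw [show finSumFinEquiv (Sum.inl i) = Fin.castAdd n i from rfl]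
          rw [Equiv.Perm.mul_apply, FF_castAdd, FF_natAdd]
          simp
        · rw [show finSumFinEquiv (Sum.inr j) = Fin.natAdd n j from rfl]
          rw [Equiv.Perm.mul_apply, FF_natAdd, FF_castAdd]
          simp
      have hfpf : ∀ x, FF π x ≠ x := by
        intro x
        obtain ⟨y, rfl⟩ := finSumFinEquiv.surjective x
        rcases y with i | j
        · rw [show finSumFinEquiv (Sum.inl i) = Fin.castAdd n i from rfl, FF_castAdd]
          intro h
          have := congrArg Fin.val h
          simp [Fin.castAdd, Fin.natAdd] at this
          omega
        · rw [show finSumFinEquiv (Sum.inr j) = Fin.natAdd n j from rfl, FF_natAdd]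
          intro h
          have := congrArg Fin.val h
          simp [Fin.castAdd, Fin.natAdd] at this
          omega
      have hPπ : P (FF π) := by
        intro x hx
        have hx' : x = Fin.castAdd n ⟨x, hx⟩ := by ext; rfl
        rw [hx', FF_castAdd]
        simp
      simp only [Finset.mem_filter, Finset.mem_univ, true_and]
      exact ⟨⟨hmul, hfpf⟩, hPπ⟩
    · intro π _ π' _ h
      apply Equiv.ext
      intro i
      have := congrArg (fun σ : Equiv.Perm (Fin (n+n)) => σ (Fin.castAdd n i)) h
      simp only [FF_castAdd] at this
      have := congrArg Fin.val this
      simp [Fin.natAdd] at this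
      exact Fin.ext this
    · -- surjectivity
      intro τ hT
      simp only [Finset.mem_filter, Finset.mem_univ, true_and] at hT
      obtain ⟨⟨hmul, hfpf⟩, hPσ⟩ := hT
      have hinv : ∀ x, τ (τ x) = x := by
        intro x
        have := congrArg (fun σ : Equiv.Perm (Fin (n+n)) => σ x) hmul
        simpa [Equiv.Perm.mul_apply] using this
      have hbound : ∀ i : Fin n, n ≤ ((τ (Fin.castAdd n i) : Fin (n+n)) : ℕ) := by
        intro i; exact hPσ _ (by simp [Fin.castAdd])
      set h : Fin n → Fin n := fun i =>
        ⟨(τ (Fin.castAdd n i) : Fin (n+n)).val - n, by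
          have h1 := hbound i
          have h2 := (τ (Fin.castAdd n i)).isLt
          omega⟩ with hh
      have hinj : Function.Injective h := by
        intro i i' hii
        have : ((τ (Fin.castAdd n i) : Fin (n+n)) : ℕ) = ((τ (Fin.castAdd n i') : Fin (n+n)) : ℕ) := by
          have := congrArg Fin.val hii
          have b1 := hbound i; have b2 := hbound i'
          simp [hh] at this
          omega
        have := τ.injective (Fin.ext this)
        have := congrArg Fin.val this
        simp [Fin.castAdd] at this
        exact Fin.ext this
      set π : Equiv.Perm (Fin n) := Equiv.ofBijective h (Finite.injective_iff_bijective.mp hinj)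
        with hπ
      refine ⟨π, Finset.mem_univ _, ?_⟩
      have hπval : ∀ i, π i = h i := fun i => rfl
      have key : ∀ i : Fin n, τ (Fin.castAdd n i) = Fin.natAdd n (π i) := by
        intro i
        apply Fin.ext
        have b1 := hbound i
        simp [hπval, hh, Fin.natAdd]
        omega
      apply Equiv.ext
      intro x
      obtain ⟨y, rfl⟩ := finSumFinEquiv.surjective x
      rcases y with i | j
      · rw [show finSumFinEquiv (Sum.inl i) = Fin.castAdd n i from rfl, FF_castAdd, key]
      · rw [show finSumFinEquiv (Sum.inr j) = Fin.natAdd n j from rfl, FF_natAdd]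
        have : Fin.natAdd n j = τ (Fin.castAdd n (π⁻¹ j)) := by
          rw [key (π⁻¹ j)]
          simp
        rw [this, hinv]
    · -- products equal
      intro π _
      have hfilter : Finset.univ.filter (fun i : Fin (n+n) => (i : ℕ) < ((FF π i : Fin (n+n)) : ℕ))
          = Finset.image (Fin.castAdd n) Finset.univ := by
        ext x
        simp only [Finset.mem_filter, Finset.mem_univ, true_and, Finset.mem_image]
        obtain ⟨y, rfl⟩ := finSumFinEquiv.surjective x
        rcases y with i | j
        · rw [show finSumFinEquiv (Sum.inl i) = Fin.castAdd n i from rfl, FF_castAdd]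
          constructor
          · intro _; exact ⟨i, rfl⟩
          · intro _
            have := (π i).isLt
            simp [Fin.castAdd, Fin.natAdd]
            omega
        · rw [show finSumFinEquiv (Sum.inr j) = Fin.natAdd n j from rfl, FF_natAdd]
          constructor
          · intro hcon
            have := (π⁻¹ j).isLt
            simp [Fin.castAdd, Fin.natAdd] at hcon
            omega
          · rintro ⟨i, hi⟩
            exfalso
            have := congrArg Fin.val hi
            have := i.isLt
            simp [Fin.castAdd, Fin.natAdd] at *
            omega
      rw [hfilter, Finset.prod_image (by intro a _ b _ hab; exact Fin.castAdd_injective _ _ hab)]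
      apply Finset.prod_congr rfl
      intro i _
      rw [FF_castAdd, hBlr]
  · -- vanishing of non-crossing terms
    intro σ hσ hσn
    simp only [Finset.mem_filter, Finset.mem_univ, true_and] at hσ hσn
    have hnP : ¬ P σ := fun hp => hσn ⟨hσ, hp⟩
    rw [hP] at hnP
    obtain ⟨i, hi, hσi⟩ : ∃ i : Fin (n+n), (i : ℕ) < n ∧ ((σ i : Fin (n+n)) : ℕ) < n := by
      by_contra hc
      push_neg at hc
      exact hnP hc
    set a : Fin (n+n) := if (i : ℕ) < ((σ i : Fin (n+n)) : ℕ) then i else σ i with ha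
    have hane : σ i ≠ i := hσ.2 i
    have hane' : (i : ℕ) ≠ ((σ i : Fin (n+n)) : ℕ) := fun h => hane (Fin.ext h.symm)
    have hinv : σ (σ i) = i := by
      have := congrArg (fun τ : Equiv.Perm (Fin (n+n)) => τ i) hσ.1
      simpa [Equiv.Perm.mul_apply] using this
    have hmem : a ∈ Finset.univ.filter (fun x : Fin (n+n) => (x : ℕ) < ((σ x : Fin (n+n)) : ℕ)) := by
      simp only [Finset.mem_filter, Finset.mem_univ, true_and, ha]
      split
      · assumption
      · rw [hinv]; omega
    apply Finset.prod_eq_zero hmem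
    apply hBll
    · rw [ha]; split <;> simpa
    · rw [ha]; split
      · exact hσi
      · rw [hinv]; exact hi
end

section
/- Let e_1,…,e_k ∈ R[U_n] and define for each subset X the ranked zeta transform ê_i,X(r) = Σ_{Y ⊆ X} (e_i)_Y r^{|Y|} ∈ R[r]. Then the coefficient of [n] in e_1·e_2⋯e_k equals the coefficient of r^n in Σ_{X ⊆ [n]} (-1)^{n-|X|} Π_{i=1}^k ê_i,X(r). -/
open scoped Classical
open Polynomial

/-- Convolution product on `R[U_n]`: `(e·f)_X = Σ_{Y ⊆ X} e_Y f_{X∖Y}`. -/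
noncomputable def convMul {R : Type*} [CommRing R] {n : ℕ}
    (e f : Finset (Fin n) → R) : Finset (Fin n) → R :=
  fun X => ∑ Y ∈ X.powerset, e Y * f (X \ Y)

/-- The multiplicative identity `1[∅]` of `R[U_n]`. -/
noncomputable def convOne {R : Type*} [CommRing R] {n : ℕ} : Finset (Fin n) → R :=
  fun X => if X = ∅ then 1 else 0

/-- The product `e_1 · e_2 ⋯ e_k` in `R[U_n]` of a list of elements. -/
noncomputable def convProd {R : Type*} [CommRing R] {n : ℕ}
    (l : List (Finset (Fin n) → R)) : Finset (Fin n) → R :=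
  l.foldr convMul convOne

/-- The ranked zeta transform `ê_X(r) = Σ_{Y ⊆ X} e_Y r^{|Y|}`. -/
noncomputable def rankedZeta {R : Type*} [CommRing R] {n : ℕ}
    (e : Finset (Fin n) → R) (X : Finset (Fin n)) : Polynomial R :=
  ∑ Y ∈ X.powerset, Polynomial.C (e Y) * Polynomial.X ^ Y.card

namespace ConvAux

variable {R : Type*} [CommRing R] {n : ℕ}

/-- Ordered partition predicate: the `Y i` are pairwise disjoint with union `X`. -/
def IsPart {n k : ℕ} (Y : Fin k → Finset (Fin n)) (X : Finset (Fin n)) : Prop :=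
  Finset.univ.sup Y = X ∧ ∑ i, (Y i).card = X.card

lemma isPart_zero {X : Finset (Fin n)} (Y : Fin 0 → Finset (Fin n)) :
    IsPart Y X ↔ X = ∅ := by
  constructor
  · rintro ⟨h, -⟩; simpa using h.symm
  · rintro rfl; exact ⟨by simp, by simp⟩

lemma sup_cons {k : ℕ} (Z : Finset (Fin n)) (Y : Fin k → Finset (Fin n)) :
    Finset.univ.sup (Fin.cons Z Y) = Z ⊔ Finset.univ.sup Y := by
  rw [Fin.univ_succ, Finset.sup_cons, Fin.cons_zero, Finset.sup_map]
  congr 1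

lemma card_sup_le {k : ℕ} (Y : Fin k → Finset (Fin n)) :
    (Finset.univ.sup Y).card ≤ ∑ i, (Y i).card := by
  rw [Finset.sup_eq_biUnion]
  exact Finset.card_biUnion_le

lemma isPart_cons {k : ℕ} {Z X : Finset (Fin n)} {Y : Fin k → Finset (Fin n)} :
    IsPart (Fin.cons Z Y) X ↔ Z ⊆ X ∧ IsPart Y (X \ Z) := by
  constructor
  · rintro ⟨h1, h2⟩
    rw [sup_cons] at h1
    rw [Fin.sum_univ_succ] at h2
    simp only [Fin.cons_zero, Fin.cons_succ] at h2
    set S := Finset.univ.sup Y with hS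
    have hZX : Z ⊆ X := h1 ▸ Finset.subset_union_left
    have hcardS : S.card ≤ ∑ i, (Y i).card := card_sup_le Y
    have hXcard : X.card ≤ Z.card + S.card := by
      rw [← h1]; exact Finset.card_union_le _ _
    have hinter : (Z ∪ S).card + (Z ∩ S).card = Z.card + S.card :=
      Finset.card_union_add_card_inter _ _
    have hZS : Z ∪ S = X := h1
    have hZSc : (Z ∪ S).card = X.card := by rw [hZS]
    have hScard : S.card = ∑ i, (Y i).card := by omega
    have hdisj : Disjoint Z S := by
      rw [Finset.disjoint_iff_inter_eq_empty, ← Finset.card_eq_zero]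
      omega
    have hSeq : S = X \ Z := by
      rw [← hZS, Finset.union_sdiff_cancel_left hdisj]
    refine ⟨hZX, hSeq ▸ hS ▸ rfl, ?_⟩
    rw [Finset.card_sdiff_of_subset hZX]
    omega
  · rintro ⟨hZX, h1, h2⟩
    have hZcard : Z.card ≤ X.card := Finset.card_le_card hZX
    constructor
    · rw [sup_cons, h1, Finset.sup_eq_union, Finset.union_sdiff_of_subset hZX]
    · rw [Fin.sum_univ_succ]
      simp only [Fin.cons_zero, Fin.cons_succ]
      rw [h2, Finset.card_sdiff_of_subset hZX]
      omega

lemma sup_subset_iff {k : ℕ} (Y : Fin k → Finset (Fin n)) (X : Finset (Fin n)) :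
    Finset.univ.sup Y ⊆ X ↔ ∀ i, Y i ⊆ X := by
  constructor
  · intro h i
    exact subset_trans (Finset.le_sup (Finset.mem_univ i)) h
  · intro h
    exact Finset.sup_le fun i _ => h i

lemma convProd_ofFn_eq {k : ℕ} (e : Fin k → Finset (Fin n) → R) (X : Finset (Fin n)) :
    convProd (List.ofFn e) X =
      ∑ Y : Fin k → Finset (Fin n), if IsPart Y X then ∏ i, e i (Y i) else 0 := by
  induction k generalizing X with
  | zero =>
    rw [List.ofFn_zero]
    show convOne X = _
    rw [Fintype.sum_unique]
    simp [convOne, isPart_zero]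
  | succ k ih =>
    rw [List.ofFn_succ]
    show convMul (e 0) (convProd (List.ofFn fun i => e i.succ)) X = _
    have key : ∀ Z : Finset (Fin n),
        (∑ Y : Fin k → Finset (Fin n),
          if IsPart (Fin.cons Z Y) X then e 0 Z * ∏ i, e i.succ (Y i) else 0) =
        if Z ∈ X.powerset then
          e 0 Z * ∑ Y : Fin k → Finset (Fin n),
            (if IsPart Y (X \ Z) then ∏ i, e i.succ (Y i) else 0)
        else 0 := by
      intro Z
      by_cases h : Z ⊆ X
      · rw [if_pos (Finset.mem_powerset.2 h), Finset.mul_sum]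
        refine Finset.sum_congr rfl fun Y _ => ?_
        rw [mul_ite, mul_zero]
        exact if_congr (by rw [isPart_cons]; simp [h]) rfl rfl
      · rw [if_neg (fun hc => h (Finset.mem_powerset.1 hc))]
        refine Finset.sum_eq_zero fun Y _ => ?_
        rw [if_neg]
        rw [isPart_cons]
        tauto
    calc convMul (e 0) (convProd (List.ofFn fun i => e i.succ)) X
        = ∑ Z ∈ X.powerset, e 0 Z *
            ∑ Y : Fin k → Finset (Fin n),
              (if IsPart Y (X \ Z) then ∏ i, e i.succ (Y i) else 0) := by
          refine Finset.sum_congr rfl fun Z hZ => ?_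
          rw [ih]
      _ = ∑ Z : Finset (Fin n), if Z ∈ X.powerset then
            e 0 Z * ∑ Y : Fin k → Finset (Fin n),
              (if IsPart Y (X \ Z) then ∏ i, e i.succ (Y i) else 0) else 0 := by
          rw [Finset.sum_ite_mem, Finset.univ_inter]
      _ = ∑ Z : Finset (Fin n), ∑ Y : Fin k → Finset (Fin n),
            if IsPart (Fin.cons Z Y) X then e 0 Z * ∏ i, e i.succ (Y i) else 0 := by
          exact (Finset.sum_congr rfl fun Z _ => (key Z)).symm
      _ = ∑ p : Finset (Fin n) × (Fin k → Finset (Fin n)),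
            if IsPart (Fin.cons p.1 p.2) X then e 0 p.1 * ∏ i, e i.succ (p.2 i) else 0 := by
          rw [Fintype.sum_prod_type]
      _ = ∑ Y : Fin (k + 1) → Finset (Fin n), if IsPart Y X then ∏ i, e i (Y i) else 0 := by
          refine Fintype.sum_equiv (Fin.consEquiv fun _ => Finset (Fin n)) _ _ fun p => ?_
          simp only [Fin.consEquiv_apply]
          refine if_congr Iff.rfl ?_ rfl
          simp [Fin.prod_univ_succ]

lemma sum_neg_one_pow_card (S : Type*) [CommRing S] (s : Finset (Fin n)) :
    ∑ m ∈ s.powerset, (-1 : S) ^ m.card = if s = ∅ then 1 else 0 := by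
  have h := congrArg (Int.cast : ℤ → S) (Finset.sum_powerset_neg_one_pow_card (x := s))
  push_cast at h
  rw [h]

lemma sum_sign (S : Type*) [CommRing S] (U : Finset (Fin n)) :
    ∑ X : Finset (Fin n), (if U ⊆ X then ((-1 : S) ^ (n - X.card)) else 0) =
      if U = Finset.univ then 1 else 0 := by
  rw [← Equiv.sum_comp (compl_involutive.toPerm (compl : Finset (Fin n) → Finset (Fin n)))
    (fun X => if U ⊆ X then ((-1 : S) ^ (n - X.card)) else 0)]
  have step : ∀ X : Finset (Fin n),
      (if U ⊆ Xᶜ then ((-1 : S) ^ (n - (Xᶜ).card)) else 0) =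
      (if X ∈ Uᶜ.powerset then ((-1 : S) ^ X.card) else 0) := by
    intro X
    have hcard : Xᶜ.card = n - X.card := by
      rw [Finset.card_compl, Fintype.card_fin]
    have hle : X.card ≤ n := by
      simpa using Finset.card_le_card (Finset.subset_univ X)
    refine if_congr ?_ ?_ rfl
    · rw [Finset.mem_powerset, Finset.subset_compl_comm]
    · rw [hcard]; congr 1; omega
  simp only [Function.Involutive.coe_toPerm]
  refine (Finset.sum_congr rfl fun X _ => step X :
    _ = ∑ X : Finset (Fin n), if X ∈ Uᶜ.powerset then ((-1 : S) ^ X.card) else 0).trans ?_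
  rw [Finset.sum_ite_mem, Finset.univ_inter,
    sum_neg_one_pow_card]
  simp [Finset.compl_eq_empty_iff]

end ConvAux

open ConvAux in
/-- The coefficient of `[n]` in `e_1·e_2⋯e_k` equals the coefficient of `r^n` in
`Σ_{X ⊆ [n]} (-1)^{n-|X|} Π_{i=1}^k ê_{i,X}(r)`. -/
theorem convProd_coeff_univ_eq_rankedZeta {R : Type*} [CommRing R] {n k : ℕ}
    (e : Fin k → Finset (Fin n) → R) :
    convProd (List.ofFn e) Finset.univ =
      (∑ X : Finset (Fin n),
          (-1 : Polynomial R) ^ (n - X.card) * ∏ i, rankedZeta (e i) X).coeff n := by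
  have hprod : ∀ X : Finset (Fin n),
      ∏ i, rankedZeta (e i) X =
      ∑ Y : Fin k → Finset (Fin n),
        if Finset.univ.sup Y ⊆ X then
          Polynomial.C (∏ i, e i (Y i)) * Polynomial.X ^ (∑ i, (Y i).card)
        else 0 := by
    intro X
    simp only [rankedZeta]
    rw [Finset.prod_univ_sum]
    rw [show (Fintype.piFinset fun _ : Fin k => X.powerset) =
        Finset.univ ∩ (Fintype.piFinset fun _ : Fin k => X.powerset) from
        (Finset.univ_inter _).symm, ← Finset.sum_ite_mem]
    refine Finset.sum_congr rfl fun Y _ => ?_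
    refine (if_congr ?_ ?_ rfl).symm
    · rw [Fintype.mem_piFinset]
      simp only [Finset.mem_powerset]
      simp [sup_subset_iff]
    · rw [Finset.prod_mul_distrib, ← map_prod, Finset.prod_pow_eq_pow_sum]
  have key : (∑ X : Finset (Fin n),
      (-1 : Polynomial R) ^ (n - X.card) * ∏ i, rankedZeta (e i) X) =
      ∑ Y : Fin k → Finset (Fin n),
        if Finset.univ.sup Y = Finset.univ then
          Polynomial.C (∏ i, e i (Y i)) * Polynomial.X ^ (∑ i, (Y i).card)
        else 0 := by
    calc ∑ X : Finset (Fin n), (-1 : Polynomial R) ^ (n - X.card) * ∏ i, rankedZeta (e i) X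
        = ∑ X : Finset (Fin n), ∑ Y : Fin k → Finset (Fin n),
            (if Finset.univ.sup Y ⊆ X then ((-1 : Polynomial R) ^ (n - X.card)) else 0) *
              (Polynomial.C (∏ i, e i (Y i)) * Polynomial.X ^ (∑ i, (Y i).card)) := by
          refine Finset.sum_congr rfl fun X _ => ?_
          rw [hprod X, Finset.mul_sum]
          refine Finset.sum_congr rfl fun Y _ => ?_
          split
          · ring
          · rw [mul_zero, zero_mul]
      _ = ∑ Y : Fin k → Finset (Fin n), ∑ X : Finset (Fin n),
            (if Finset.univ.sup Y ⊆ X then ((-1 : Polynomial R) ^ (n - X.card)) else 0) *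
              (Polynomial.C (∏ i, e i (Y i)) * Polynomial.X ^ (∑ i, (Y i).card)) :=
          Finset.sum_comm
      _ = ∑ Y : Fin k → Finset (Fin n),
            (if Finset.univ.sup Y = Finset.univ then (1 : Polynomial R) else 0) *
              (Polynomial.C (∏ i, e i (Y i)) * Polynomial.X ^ (∑ i, (Y i).card)) := by
          refine Finset.sum_congr rfl fun Y _ => ?_
          rw [← Finset.sum_mul, sum_sign]
      _ = _ := by
          refine Finset.sum_congr rfl fun Y _ => ?_
          split
          · rw [one_mul]
          · rw [zero_mul]
  rw [key, convProd_ofFn_eq, Polynomial.finset_sum_coeff]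
  refine Finset.sum_congr rfl fun Y _ => ?_
  rw [apply_ite (fun p : Polynomial R => p.coeff n), Polynomial.coeff_zero,
    Polynomial.coeff_C_mul, Polynomial.coeff_X_pow]
  have hn : (Finset.univ : Finset (Fin n)).card = n := by simp
  by_cases h1 : Finset.univ.sup Y = Finset.univ
  · by_cases h2 : n = ∑ i, (Y i).card
    · rw [if_pos ⟨h1, by rw [hn]; exact h2.symm⟩, if_pos h1, if_pos h2, mul_one]
    · rw [if_neg (fun h => h2 ((h.2.trans hn).symm)), if_pos h1, if_neg h2, mul_zero]
  · rw [if_neg (fun h => h1 h.1), if_neg h1]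
end

section
/- The ranked zeta transform is multiplicative on the convolution ring: for e, f ∈ R[U_n] with product (e·f)_X = Σ_{Y⊆X} e_Y f_{X∖Y}, and any subset X ⊆ [n], the coefficient of r^{|X|} in ê_X(r)·f̂_X(r), summed with signs Σ_{Y⊆X}(-1)^{|X|-|Y|}[r^{|X|}](ê_Y(r) f̂_Y(r)), equals (e·f)_X. -/
open scoped Classical
open Polynomial

lemma aux_neg_one_pow {R : Type*} [CommRing R] {α : Type*} [DecidableEq α] (x : Finset α) :
    ∑ m ∈ x.powerset, (-1 : R) ^ m.card = if x = ∅ then 1 else 0 := by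
  have h := congrArg (Int.cast : ℤ → R) (Finset.sum_powerset_neg_one_pow_card (x := x))
  push_cast at h
  simpa using h

lemma aux_filter_sum {R : Type*} [CommRing R] {α : Type*} [DecidableEq α]
    (S X : Finset α) (hS : S ⊆ X) :
    ∑ Y ∈ X.powerset.filter (fun Y => S ⊆ Y), (-1 : R) ^ (X.card - Y.card)
      = if S = X then 1 else 0 := by
  have : ∑ Y ∈ X.powerset.filter (fun Y => S ⊆ Y), (-1 : R) ^ (X.card - Y.card)
      = ∑ Z ∈ (X \ S).powerset, (-1 : R) ^ Z.card := by
    refine Finset.sum_nbij' (fun Y => X \ Y) (fun Z => X \ Z) ?_ ?_ ?_ ?_ ?_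
    · intro Y hY
      simp only [Finset.mem_filter, Finset.mem_powerset] at hY
      exact Finset.mem_powerset.2 (Finset.sdiff_subset_sdiff le_rfl hY.2)
    · intro Z hZ
      simp only [Finset.mem_powerset] at hZ
      simp only [Finset.mem_filter, Finset.mem_powerset]
      refine ⟨Finset.sdiff_subset, ?_⟩
      intro a ha
      have haX : a ∈ X := hS ha
      have : a ∉ Z := fun h => (Finset.mem_sdiff.1 (hZ h)).2 ha
      simp [Finset.mem_sdiff, haX, this]
    · intro Y hY
      simp only [Finset.mem_filter, Finset.mem_powerset] at hY
      exact Finset.sdiff_sdiff_eq_self hY.1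
    · intro Z hZ
      simp only [Finset.mem_powerset] at hZ
      exact Finset.sdiff_sdiff_eq_self (hZ.trans Finset.sdiff_subset)
    · intro Y hY
      simp only [Finset.mem_filter, Finset.mem_powerset] at hY
      rw [Finset.card_sdiff_of_subset hY.1]
  rw [this, aux_neg_one_pow]
  by_cases h : S = X
  · simp [h]
  · rw [if_neg h, if_neg]
    intro hXS
    exact h (Finset.Subset.antisymm hS (Finset.sdiff_eq_empty_iff_subset.mp hXS))

lemma coeff_mul_rankedZeta {R : Type*} [CommRing R] {n : ℕ}
    (e f : Finset (Fin n) → R) (Y : Finset (Fin n)) (m : ℕ) :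
    (rankedZeta e Y * rankedZeta f Y).coeff m
      = ∑ A ∈ Y.powerset, ∑ B ∈ Y.powerset,
          if A.card + B.card = m then e A * f B else 0 := by
  unfold rankedZeta
  rw [Finset.sum_mul_sum, Polynomial.finset_sum_coeff]
  refine Finset.sum_congr rfl fun A _ => ?_
  rw [Polynomial.finset_sum_coeff]
  refine Finset.sum_congr rfl fun B _ => ?_
  rw [mul_mul_mul_comm, ← Polynomial.C_mul, ← pow_add, Polynomial.coeff_C_mul,
    Polynomial.coeff_X_pow]
  simp only [mul_ite, mul_one, mul_zero, eq_comm]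

/-- The ranked zeta transform is multiplicative for the convolution product:
`(e·f)_X = Σ_{Y⊆X} (-1)^{|X|-|Y|} [r^{|X|}] (ê_Y(r) · f̂_Y(r))`. -/
theorem convMul_eq_rankedZeta_inversion {R : Type*} [CommRing R] {n : ℕ}
    (e f : Finset (Fin n) → R) (X : Finset (Fin n)) :
    convMul e f X =
      ∑ Y ∈ X.powerset,
        (-1 : R) ^ (X.card - Y.card) * (rankedZeta e Y * rankedZeta f Y).coeff X.card := by
  have hpow : ∀ Y ∈ X.powerset, Y.powerset = X.powerset.filter (fun A => A ⊆ Y) := by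
    intro Y hY
    rw [Finset.mem_powerset] at hY
    ext A
    simp only [Finset.mem_powerset, Finset.mem_filter]
    exact ⟨fun h => ⟨h.trans hY, h⟩, fun h => h.2⟩
  have inner : ∀ Y ∈ X.powerset,
      (∑ A ∈ Y.powerset, ∑ B ∈ Y.powerset,
          if A.card + B.card = X.card then e A * f B else 0)
      = ∑ A ∈ X.powerset, ∑ B ∈ X.powerset,
          (if A ∪ B ⊆ Y then (if A.card + B.card = X.card then e A * f B else 0) else 0) := by
    intro Y hY
    rw [hpow Y hY, Finset.sum_filter]
    refine Finset.sum_congr rfl fun A _ => ?_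
    by_cases hA : A ⊆ Y
    · rw [if_pos hA, Finset.sum_filter]
      refine Finset.sum_congr rfl fun B _ => ?_
      simp [Finset.union_subset_iff, hA]
    · rw [if_neg hA]
      symm
      refine Finset.sum_eq_zero fun B _ => ?_
      rw [if_neg]
      exact fun h => hA (Finset.union_subset_iff.1 h).1
  have step1 :
      ∑ Y ∈ X.powerset,
        (-1 : R) ^ (X.card - Y.card) * (rankedZeta e Y * rankedZeta f Y).coeff X.card
      = ∑ Y ∈ X.powerset, ∑ A ∈ X.powerset, ∑ B ∈ X.powerset,
          (-1 : R) ^ (X.card - Y.card) *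
            (if A ∪ B ⊆ Y then (if A.card + B.card = X.card then e A * f B else 0) else 0) := by
    refine Finset.sum_congr rfl fun Y hY => ?_
    rw [coeff_mul_rankedZeta, inner Y hY, Finset.mul_sum]
    exact Finset.sum_congr rfl fun A _ => Finset.mul_sum _ _ _
  have step2 : ∀ A ∈ X.powerset, ∀ B ∈ X.powerset,
      (∑ Y ∈ X.powerset, (-1 : R) ^ (X.card - Y.card) *
          (if A ∪ B ⊆ Y then (if A.card + B.card = X.card then e A * f B else 0) else 0))
      = (if A ∪ B = X then 1 else 0) *
          (if A.card + B.card = X.card then e A * f B else 0) := by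
    intro A hA B hB
    have hsub : A ∪ B ⊆ X :=
      Finset.union_subset (Finset.mem_powerset.1 hA) (Finset.mem_powerset.1 hB)
    calc (∑ Y ∈ X.powerset, (-1 : R) ^ (X.card - Y.card) *
          (if A ∪ B ⊆ Y then (if A.card + B.card = X.card then e A * f B else 0) else 0))
        = ∑ Y ∈ X.powerset, (if A ∪ B ⊆ Y then
            (-1 : R) ^ (X.card - Y.card) *
              (if A.card + B.card = X.card then e A * f B else 0) else 0) := by
          refine Finset.sum_congr rfl fun Y _ => ?_
          rw [mul_ite, mul_zero]
      _ = ∑ Y ∈ X.powerset.filter (fun Y => A ∪ B ⊆ Y),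
            (-1 : R) ^ (X.card - Y.card) *
              (if A.card + B.card = X.card then e A * f B else 0) :=
          (Finset.sum_filter _ _).symm
      _ = (∑ Y ∈ X.powerset.filter (fun Y => A ∪ B ⊆ Y),
            (-1 : R) ^ (X.card - Y.card)) *
              (if A.card + B.card = X.card then e A * f B else 0) := by
          rw [Finset.sum_mul]
      _ = _ := by rw [aux_filter_sum _ _ hsub]
  rw [step1]
  conv_rhs => rw [Finset.sum_comm]
  show (∑ A ∈ X.powerset, e A * f (X \ A)) = _
  refine Finset.sum_congr rfl fun A hA => ?_
  have hAX : A ⊆ X := Finset.mem_powerset.1 hA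
  rw [Finset.sum_comm, Finset.sum_congr rfl (fun B hB => step2 A hA B hB)]
  have hzero : ∀ B ∈ X.powerset, B ≠ X \ A →
      ((if A ∪ B = X then (1:R) else 0) *
        (if A.card + B.card = X.card then e A * f B else 0)) = 0 := by
    intro B _ hne
    split_ifs with h1 h2
    · exfalso
      apply hne
      have hinter := Finset.card_union_add_card_inter A B
      rw [h1, h2] at hinter
      have h0 : A ∩ B = ∅ := Finset.card_eq_zero.mp (by omega)
      have hd : Disjoint A B := Finset.disjoint_iff_inter_eq_empty.2 h0
      rw [← h1, Finset.union_sdiff_cancel_left hd]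
    all_goals simp
  rw [Finset.sum_eq_single_of_mem (X \ A) (Finset.mem_powerset.2 Finset.sdiff_subset) hzero]
  rw [Finset.union_sdiff_of_subset hAX, if_pos rfl, one_mul, if_pos]
  rw [Finset.card_sdiff_of_subset hAX]
  exact Nat.add_sub_cancel' (Finset.card_le_card hAX)
end

section
/- For a symmetric zero-diagonal matrix B ∈ R^{2n×2n} with n ≥ 1, haf(B) = B_{1,2} · haf(B') + Σ_{2 < j < k ≤ 2n} (B_{1,j}B_{2,k} + B_{1,k}B_{2,j}) · haf(B'_{jk}), where B' is B with rows/columns 1 and 2 removed and B'_{jk} is B with rows/columns 1, 2, j, k removed. -/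
open scoped Classical
open Matrix

noncomputable def delFour {n : ℕ} (j k : Fin (2 * n + 2))
    (h1 : 1 < (j : ℕ)) (h2 : (j : ℕ) < (k : ℕ)) :
    Fin (2 * n - 2) ↪o Fin (2 * n + 2) :=
  ((((Finset.univ.erase 0).erase 1).erase j).erase k).orderEmbOfFin (by
    have hk := k.isLt
    rw [Finset.card_erase_of_mem, Finset.card_erase_of_mem, Finset.card_erase_of_mem,
      Finset.card_erase_of_mem, Finset.card_univ, Fintype.card_fin]
    · omega
    all_goals simp only [Finset.mem_erase, Finset.mem_univ, and_true, ne_eq, Fin.ext_iff, Fin.val_zero,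
      Fin.val_one]
    all_goals omega)

lemma perm_sq_iff {α : Type*} (σ : Equiv.Perm α) : σ * σ = 1 ↔ ∀ x, σ (σ x) = x := by
  constructor
  · intro h x
    have := congrArg (fun p : Equiv.Perm α => p x) h
    simpa [Equiv.Perm.mul_apply] using this
  · intro h
    ext x
    simp [Equiv.Perm.mul_apply, h x]

set_option maxHeartbeats 1000000 in
lemma hafnian_class_sum {R : Type*} [CommRing R] {M m d : ℕ}
    (B : Matrix (Fin M) (Fin M) R)
    (e : Fin m → Fin M) (f : Fin d → Fin M)
    (he : StrictMono e) (hf : StrictMono f)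
    (hdisj : ∀ i a, e i ≠ f a)
    (hcov : ∀ x, (∃ i, e i = x) ∨ (∃ a, f a = x))
    (π₀ : Equiv.Perm (Fin d)) (hπ : ∀ a, π₀ (π₀ a) = a) (hπf : ∀ a, π₀ a ≠ a) :
    ∑ σ ∈ Finset.univ.filter (fun σ : Equiv.Perm (Fin M) =>
        (σ * σ = 1 ∧ ∀ i, σ i ≠ i) ∧ ∀ a, σ (f a) = f (π₀ a)),
      ∏ i ∈ Finset.univ.filter (fun i : Fin M => (i : ℕ) < (σ i : ℕ)), B i (σ i)
    = (∏ a ∈ Finset.univ.filter (fun a : Fin d => (a : ℕ) < (π₀ a : ℕ)), B (f a) (f (π₀ a)))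
        * hafnian (B.submatrix e e) := by
  have hbij : Function.Bijective (Sum.elim e f) := by
    constructor
    · intro x y hxy
      cases x with
      | inl i => cases y with
        | inl i' => simpa using he.injective hxy
        | inr a => exact absurd hxy (hdisj i a)
      | inr a => cases y with
        | inl i' => exact absurd hxy.symm (hdisj i' a)
        | inr a' => simpa using hf.injective hxy
    · intro x
      rcases hcov x with ⟨i, hi⟩ | ⟨a, ha⟩
      · exact ⟨Sum.inl i, hi⟩
      · exact ⟨Sum.inr a, ha⟩
  set E : (Fin m ⊕ Fin d) ≃ Fin M := Equiv.ofBijective _ hbij with hE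
  have hEl : ∀ i, E (Sum.inl i) = e i := fun i => rfl
  have hEr : ∀ a, E (Sum.inr a) = f a := fun a => rfl
  set Φ : Equiv.Perm (Fin m) → Equiv.Perm (Fin M) :=
    fun τ => E.permCongr (Equiv.sumCongr τ π₀) with hΦ
  have hΦl : ∀ τ i, Φ τ (e i) = e (τ i) := by
    intro τ i
    have : E.symm (e i) = Sum.inl i := by rw [← hEl]; exact E.symm_apply_apply _
    simp [hΦ, Equiv.permCongr_apply, this, hEl]
  have hΦr : ∀ τ a, Φ τ (f a) = f (π₀ a) := by
    intro τ a
    have : E.symm (f a) = Sum.inr a := by rw [← hEr]; exact E.symm_apply_apply _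
    simp [hΦ, Equiv.permCongr_apply, this, hEr]
  rw [hafnian, Finset.mul_sum]
  refine (Finset.sum_nbij Φ ?_ ?_ ?_ ?_).symm
  · intro τ hτ
    simp only [Finset.mem_filter, Finset.mem_univ, true_and] at hτ ⊢
    obtain ⟨hτ2, hτf⟩ := hτ
    have hτ2' := (perm_sq_iff τ).1 hτ2
    refine ⟨⟨?_, ?_⟩, fun a => hΦr τ a⟩
    · rw [perm_sq_iff]
      intro x
      obtain ⟨y, rfl⟩ := E.surjective x
      cases y with
      | inl i => rw [hEl, hΦl, hΦl, hτ2']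
      | inr a => rw [hEr, hΦr, hΦr, hπ]
    · intro x hx
      obtain ⟨y, rfl⟩ := E.surjective x
      cases y with
      | inl i =>
        rw [hEl, hΦl] at hx
        exact hτf i (he.injective hx)
      | inr a =>
        rw [hEr, hΦr] at hx
        exact hπf a (hf.injective hx)
  · intro τ1 _ τ2 _ h
    apply Equiv.ext
    intro i
    have := congrArg (fun p : Equiv.Perm (Fin M) => p (e i)) h
    simp only [hΦl] at this
    exact he.injective this
  · intro σ hσ
    simp only [Finset.coe_filter, Finset.mem_univ, true_and, Set.mem_setOf_eq] at hσ
    obtain ⟨⟨hσ2, hσf⟩, hσr⟩ := hσ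
    have hσ2' := (perm_sq_iff σ).1 hσ2
    have key : ∀ i, ∃ i', e i' = σ (e i) := by
      intro i
      rcases hcov (σ (e i)) with h | ⟨a, ha⟩
      · exact h
      · exfalso
        have : σ (f a) = e i := by rw [ha, hσ2']
        rw [hσr a] at this
        exact hdisj i (π₀ a) this.symm
    choose r hr using key
    have hrr : Function.Involutive r := by
      intro i
      apply he.injective
      rw [hr, hr, hσ2']
    refine ⟨hrr.toPerm r, ?_, ?_⟩
    · simp only [Finset.coe_filter, Finset.mem_univ, true_and, Set.mem_setOf_eq]
      constructor
      · rw [perm_sq_iff]; intro x; exact hrr x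
      · intro i hi
        have : σ (e i) = e i := by rw [← hr]; exact congrArg e hi
        exact hσf (e i) this
    · apply Equiv.ext
      intro x
      obtain ⟨y, rfl⟩ := E.surjective x
      cases y with
      | inl i => rw [hEl, hΦl]; exact hr i
      | inr a => rw [hEr, hΦr, hσr]
  · intro τ hτ
    have hcond : ∀ a b : Fin m, ((e a : ℕ) < (e b : ℕ)) ↔ ((a : ℕ) < (b : ℕ)) := by
      intro a b
      rw [← Fin.lt_def, ← Fin.lt_def, he.lt_iff_lt]
    have hcondf : ∀ a b : Fin d, ((f a : ℕ) < (f b : ℕ)) ↔ ((a : ℕ) < (b : ℕ)) := by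
      intro a b
      rw [← Fin.lt_def, ← Fin.lt_def, hf.lt_iff_lt]
    calc (∏ a ∈ Finset.univ.filter (fun a : Fin d => (a : ℕ) < (π₀ a : ℕ)), B (f a) (f (π₀ a)))
          * ∏ i ∈ Finset.univ.filter (fun i : Fin m => (i : ℕ) < (τ i : ℕ)),
              B.submatrix e e i (τ i)
        = (∏ a : Fin d, if (a : ℕ) < (π₀ a : ℕ) then B (f a) (f (π₀ a)) else 1)
          * ∏ i : Fin m, if (i : ℕ) < (τ i : ℕ) then B (e i) (e (τ i)) else 1 := by
          rw [Finset.prod_filter, Finset.prod_filter]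
          simp [Matrix.submatrix_apply]
      _ = ∏ y : Fin m ⊕ Fin d,
            (fun x : Fin M => if (x : ℕ) < ((Φ τ) x : ℕ) then B x (Φ τ x) else 1) (E y) := by
          rw [Fintype.prod_sum_type, mul_comm]
          congr 1
          · refine Finset.prod_congr rfl fun i _ => ?_
            simp only [hEl, hΦl]
            exact (if_congr (hcond i (τ i)) rfl rfl).symm
          · refine Finset.prod_congr rfl fun a _ => ?_
            simp only [hEr, hΦr]
            exact (if_congr (hcondf a (π₀ a)) rfl rfl).symm
      _ = ∏ x : Fin M, if (x : ℕ) < ((Φ τ) x : ℕ) then B x (Φ τ x) else 1 :=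
          Fintype.prod_equiv E _ _ (fun _ => rfl)
      _ = ∏ x ∈ Finset.univ.filter (fun x : Fin M => (x : ℕ) < ((Φ τ) x : ℕ)),
            B x (Φ τ x) := (Finset.prod_filter _ _).symm

/-- The squeeze expansion of the hafnian:
`haf(B) = B_{1,2}·haf(B') + Σ_{2 < j < k} (B_{1,j}B_{2,k} + B_{1,k}B_{2,j})·haf(B'_{jk})`,
where `B'` deletes rows/columns 1,2 and `B'_{jk}` deletes rows/columns 1,2,j,k. -/
theorem hafnian_squeeze_expansion {R : Type*} [CommRing R] {n : ℕ}
    (B : Matrix (Fin (2 * n + 2)) (Fin (2 * n + 2)) R)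
    (hsymm : Bᵀ = B) (hdiag : ∀ i, B i i = 0) :
    hafnian B =
      B 0 1 * hafnian (B.submatrix (fun i : Fin (2 * n) => i.succ.succ)
          (fun i : Fin (2 * n) => i.succ.succ)) +
        ∑ p : {p : Fin (2 * n + 2) × Fin (2 * n + 2) //
            1 < (p.1 : ℕ) ∧ (p.1 : ℕ) < (p.2 : ℕ)},
          (B 0 p.1.1 * B 1 p.1.2 + B 0 p.1.2 * B 1 p.1.1) *
            hafnian (B.submatrix (delFour p.1.1 p.1.2 p.2.1 p.2.2)
              (delFour p.1.1 p.1.2 p.2.1 p.2.2)) := by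
  classical
  have val0 : ((0 : Fin (2*n+2)) : ℕ) = 0 := by simp
  have val1 : ((1 : Fin (2*n+2)) : ℕ) = 1 := by simp
  rw [hafnian]
  rw [← Finset.sum_filter_add_sum_filter_not
    (Finset.univ.filter (fun σ : Equiv.Perm (Fin (2*n+2)) => σ * σ = 1 ∧ ∀ i, σ i ≠ i))
    (fun σ => σ 0 = 1)]
  congr 1
  · -- first term
    set f₁ : Fin 2 → Fin (2*n+2) := fun a => ⟨a.1, by omega⟩ with hf₁def
    have hf10 : f₁ 0 = 0 := by apply Fin.ext; simp [hf₁def, val0]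
    have hf11 : f₁ 1 = 1 := by apply Fin.ext; simp [hf₁def, val1]
    have s0 : Equiv.swap (0 : Fin 2) 1 0 = 1 := by decide
    have s1 : Equiv.swap (0 : Fin 2) 1 1 = 0 := by decide
    rw [Finset.filter_filter]
    have hset : Finset.univ.filter
          (fun σ : Equiv.Perm (Fin (2*n+2)) => (σ * σ = 1 ∧ ∀ i, σ i ≠ i) ∧ σ 0 = 1)
        = Finset.univ.filter (fun σ : Equiv.Perm (Fin (2*n+2)) =>
          (σ * σ = 1 ∧ ∀ i, σ i ≠ i) ∧ ∀ a : Fin 2, σ (f₁ a) = f₁ (Equiv.swap 0 1 a)) := by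
      apply Finset.filter_congr
      intro σ _
      constructor
      · rintro ⟨hP, h01⟩
        refine ⟨hP, ?_⟩
        have hinv := (perm_sq_iff σ).1 hP.1
        have h2 : ∀ a : Fin 2, a = 0 ∨ a = 1 := by decide
        intro a
        rcases h2 a with rfl | rfl
        · rw [s0, hf10, hf11]; exact h01
        · rw [s1, hf11, hf10, ← h01]; exact hinv 0
      · rintro ⟨hP, h⟩
        refine ⟨hP, ?_⟩
        have := h 0
        rwa [s0, hf10, hf11] at this
    rw [hset]
    rw [hafnian_class_sum B (fun i : Fin (2*n) => i.succ.succ) f₁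
      (fun a b h => by simp only [Fin.lt_def, Fin.val_succ] at h ⊢; omega)
      (fun a b h => by simp only [Fin.lt_def] at h ⊢; exact h)
      (fun i a h => by
        have h2 := a.isLt
        have := congrArg Fin.val h
        simp only [Fin.val_succ, hf₁def] at this
        omega)
      (fun x => by
        by_cases hx : (x : ℕ) < 2
        · exact Or.inr ⟨⟨x.1, hx⟩, Fin.ext rfl⟩
        · refine Or.inl ⟨⟨x.1 - 2, by have := x.isLt; omega⟩, Fin.ext ?_⟩
          simp only [Fin.val_succ]
          omega)
      (Equiv.swap 0 1) (by decide) (by decide)]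
    congr 1
    have hfilt : Finset.univ.filter
        (fun a : Fin 2 => (a : ℕ) < ((Equiv.swap (0:Fin 2) 1 a) : ℕ)) = {0} := by
      ext a
      simp only [Finset.mem_filter, Finset.mem_univ, true_and, Finset.mem_singleton]
      revert a
      decide
    rw [hfilt, Finset.prod_singleton, s0, hf10, hf11]
  · -- second term
    set key : Equiv.Perm (Fin (2*n+2)) → Fin (2*n+2) × Fin (2*n+2) :=
      fun σ => if (σ 0 : ℕ) < (σ 1 : ℕ) then (σ 0, σ 1) else (σ 1, σ 0) with hkeydef
    have hmaps : ∀ σ ∈ (Finset.univ.filter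
          (fun σ : Equiv.Perm (Fin (2*n+2)) => σ * σ = 1 ∧ ∀ i, σ i ≠ i)).filter
          (fun σ => ¬σ 0 = 1),
        key σ ∈ Finset.univ.filter
          (fun p : Fin (2*n+2) × Fin (2*n+2) => 1 < (p.1 : ℕ) ∧ (p.1 : ℕ) < (p.2 : ℕ)) := by
      intro σ hσ
      simp only [Finset.mem_filter, Finset.mem_univ, true_and] at hσ
      obtain ⟨⟨hP2, hPf⟩, h01⟩ := hσ
      have hinv := (perm_sq_iff σ).1 hP2
      have v00 : (σ 0 : ℕ) ≠ 0 := fun h => hPf 0 (Fin.ext (h.trans val0.symm))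
      have v01 : (σ 0 : ℕ) ≠ 1 := fun h => h01 (Fin.ext (h.trans val1.symm))
      have v11 : (σ 1 : ℕ) ≠ 1 := fun h => hPf 1 (Fin.ext (h.trans val1.symm))
      have v10 : (σ 1 : ℕ) ≠ 0 := by
        intro h
        have t := hinv 1
        have h' : σ 1 = 0 := Fin.ext (h.trans val0.symm)
        rw [h'] at t
        exact h01 t
      have vnd : (σ 0 : ℕ) ≠ (σ 1 : ℕ) := by
        intro h
        have : (0 : Fin (2*n+2)) = 1 := σ.injective (Fin.ext h)
        have := congrArg Fin.val this
        rw [val0, val1] at this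
        omega
      simp only [Finset.mem_filter, Finset.mem_univ, true_and, hkeydef]
      split_ifs with hlt
      · refine ⟨?_, ?_⟩
        · show 1 < (σ 0 : ℕ); omega
        · show (σ 0 : ℕ) < (σ 1 : ℕ); omega
      · push_neg at hlt
        refine ⟨?_, ?_⟩
        · show 1 < (σ 1 : ℕ); omega
        · show (σ 1 : ℕ) < (σ 0 : ℕ); omega
    rw [← Finset.sum_fiberwise_of_maps_to hmaps]
    refine Finset.sum_bij
      (fun p hp => (⟨p, by simpa using (Finset.mem_filter.1 hp).2⟩ :
        {p : Fin (2*n+2) × Fin (2*n+2) // 1 < (p.1 : ℕ) ∧ (p.1 : ℕ) < (p.2 : ℕ)}))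
      (fun p hp => Finset.mem_univ _)
      (fun p1 h1 p2 h2 h => by simpa using h)
      (fun q _ => ⟨q.1, Finset.mem_filter.2 ⟨Finset.mem_univ _, q.2⟩, by simp⟩)
      ?_
    intro p hp
    obtain ⟨hp1, hp2⟩ : 1 < (p.1 : ℕ) ∧ (p.1 : ℕ) < (p.2 : ℕ) := by
      simpa using (Finset.mem_filter.1 hp).2
    show _ = (B 0 p.1 * B 1 p.2 + B 0 p.2 * B 1 p.1) *
      hafnian (B.submatrix (delFour p.1 p.2 hp1 hp2) (delFour p.1 p.2 hp1 hp2))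
    set g4 : Fin 4 → Fin (2*n+2) := fun c =>
      if (c : ℕ) = 0 then 0 else if (c : ℕ) = 1 then 1 else if (c : ℕ) = 2 then p.1 else p.2
      with hg4def
    have hg0 : g4 0 = 0 := rfl
    have hg1 : g4 1 = 1 := rfl
    have hg2 : g4 2 = p.1 := rfl
    have hg3 : g4 3 = p.2 := rfl
    have hfour : ∀ c : Fin 4, c = 0 ∨ c = 1 ∨ c = 2 ∨ c = 3 := by decide
    -- the two pairings of {0,1,j,k}
    have hπ20 : ((Equiv.swap (0:Fin 4) 2 * Equiv.swap 1 3 : Equiv.Perm (Fin 4))) 0 = 2 := by decide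
    have hπ21 : ((Equiv.swap (0:Fin 4) 2 * Equiv.swap 1 3 : Equiv.Perm (Fin 4))) 1 = 3 := by decide
    have hπ22 : ((Equiv.swap (0:Fin 4) 2 * Equiv.swap 1 3 : Equiv.Perm (Fin 4))) 2 = 0 := by decide
    have hπ23 : ((Equiv.swap (0:Fin 4) 2 * Equiv.swap 1 3 : Equiv.Perm (Fin 4))) 3 = 1 := by decide
    have hπ30 : ((Equiv.swap (0:Fin 4) 3 * Equiv.swap 1 2 : Equiv.Perm (Fin 4))) 0 = 3 := by decide
    have hπ31 : ((Equiv.swap (0:Fin 4) 3 * Equiv.swap 1 2 : Equiv.Perm (Fin 4))) 1 = 2 := by decide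
    have hπ32 : ((Equiv.swap (0:Fin 4) 3 * Equiv.swap 1 2 : Equiv.Perm (Fin 4))) 2 = 1 := by decide
    have hπ33 : ((Equiv.swap (0:Fin 4) 3 * Equiv.swap 1 2 : Equiv.Perm (Fin 4))) 3 = 0 := by decide
    have hvp1 : (p.1 : ℕ) ≠ 0 := by omega
    have hvp2 : (p.2 : ℕ) ≠ 0 := by omega
    -- hypotheses of hafnian_class_sum shared by the two classes
    have hg4mono : StrictMono g4 := by
      intro a b hab
      rcases hfour a with rfl|rfl|rfl|rfl <;> rcases hfour b with rfl|rfl|rfl|rfl <;>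
        first
          | exact absurd hab (by decide)
          | (simp only [hg0, hg1, hg2, hg3, Fin.lt_def, val0, val1]; omega)
    have hcard : ((((Finset.univ.erase (0 : Fin (2*n+2))).erase 1).erase p.1).erase
        p.2).card = 2 * n - 2 := by
      have hk := p.2.isLt
      rw [Finset.card_erase_of_mem, Finset.card_erase_of_mem, Finset.card_erase_of_mem,
        Finset.card_erase_of_mem, Finset.card_univ, Fintype.card_fin]
      · omega
      all_goals simp only [Finset.mem_erase, Finset.mem_univ, and_true, ne_eq, Fin.ext_iff, Fin.val_zero,
        Fin.val_one]
      all_goals omega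
    have hdisj2 : ∀ i a, (delFour p.1 p.2 hp1 hp2) i ≠ g4 a := by
      intro i a heq
      have hm := Finset.orderEmbOfFin_mem
        ((((Finset.univ.erase (0 : Fin (2*n+2))).erase 1).erase p.1).erase p.2) hcard i
      simp only [Finset.mem_erase, Finset.mem_univ, and_true] at hm
      obtain ⟨m4, m3, m2, m1⟩ := hm
      rcases hfour a with rfl|rfl|rfl|rfl
      · rw [hg0] at heq; exact m1 heq
      · rw [hg1] at heq; exact m2 heq
      · rw [hg2] at heq; exact m3 heq
      · rw [hg3] at heq; exact m4 heq
    have hcov2 : ∀ x : Fin (2*n+2),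
        (∃ i, (delFour p.1 p.2 hp1 hp2) i = x) ∨ ∃ a, g4 a = x := by
      intro x
      rcases eq_or_ne x p.2 with rfl|h4
      · exact Or.inr ⟨3, hg3⟩
      rcases eq_or_ne x p.1 with rfl|h3
      · exact Or.inr ⟨2, hg2⟩
      rcases eq_or_ne x 1 with rfl|h2'
      · exact Or.inr ⟨1, hg1⟩
      rcases eq_or_ne x 0 with rfl|h1'
      · exact Or.inr ⟨0, hg0⟩
      · left
        have hx : x ∈ Set.range (⇑(((((Finset.univ.erase (0 : Fin (2*n+2))).erase 1).erase
            p.1).erase p.2).orderEmbOfFin hcard)) := by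
          rw [Finset.range_orderEmbOfFin]
          exact Finset.mem_coe.2 (Finset.mem_erase.2 ⟨h4, Finset.mem_erase.2 ⟨h3,
            Finset.mem_erase.2 ⟨h2', Finset.mem_erase.2 ⟨h1', Finset.mem_univ x⟩⟩⟩⟩)
        obtain ⟨i, hi⟩ := hx
        exact ⟨i, hi⟩
    have hiff : ∀ σ : Equiv.Perm (Fin (2*n+2)), (σ * σ = 1 ∧ ∀ i, σ i ≠ i) →
        ((¬ σ 0 = 1 ∧ key σ = p) ↔
          ((∀ c, σ (g4 c) = g4 ((Equiv.swap (0:Fin 4) 2 * Equiv.swap 1 3 : Equiv.Perm (Fin 4)) c)) ∨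
           (∀ c, σ (g4 c) = g4 ((Equiv.swap (0:Fin 4) 3 * Equiv.swap 1 2 : Equiv.Perm (Fin 4)) c)))) := by
      intro σ hP
      have hinv := (perm_sq_iff σ).1 hP.1
      constructor
      · rintro ⟨h01, hkey⟩
        simp only [hkeydef] at hkey
        by_cases hlt : (σ 0 : ℕ) < (σ 1 : ℕ)
        · rw [if_pos hlt] at hkey
          have e1 : σ 0 = p.1 := congrArg Prod.fst hkey
          have e2 : σ 1 = p.2 := congrArg Prod.snd hkey
          left
          intro c
          rcases hfour c with rfl|rfl|rfl|rfl
          · rw [hg0, hπ20, hg2]; exact e1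
          · rw [hg1, hπ21, hg3]; exact e2
          · rw [hg2, hπ22, hg0, ← e1]; exact hinv 0
          · rw [hg3, hπ23, hg1, ← e2]; exact hinv 1
        · rw [if_neg hlt] at hkey
          have e1 : σ 1 = p.1 := congrArg Prod.fst hkey
          have e2 : σ 0 = p.2 := congrArg Prod.snd hkey
          right
          intro c
          rcases hfour c with rfl|rfl|rfl|rfl
          · rw [hg0, hπ30, hg3]; exact e2
          · rw [hg1, hπ31, hg2]; exact e1
          · rw [hg2, hπ32, hg1, ← e1]; exact hinv 1
          · rw [hg3, hπ33, hg0, ← e2]; exact hinv 0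
      · rintro (h | h)
        · have e1 : σ 0 = p.1 := by have := h 0; rwa [hg0, hπ20, hg2] at this
          have e2 : σ 1 = p.2 := by have := h 1; rwa [hg1, hπ21, hg3] at this
          constructor
          · intro hbad
            have : (p.1 : ℕ) = 1 := by rw [← e1, hbad, val1]
            omega
          · simp only [hkeydef]
            rw [e1, e2, if_pos hp2]
        · have e2 : σ 0 = p.2 := by have := h 0; rwa [hg0, hπ30, hg3] at this
          have e1 : σ 1 = p.1 := by have := h 1; rwa [hg1, hπ31, hg2] at this
          constructor
          · intro hbad
            have : (p.2 : ℕ) = 1 := by rw [← e2, hbad, val1]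
            omega
          · simp only [hkeydef]
            rw [e1, e2, if_neg (by omega)]
    have hsplit : ((Finset.univ.filter
          (fun σ : Equiv.Perm (Fin (2*n+2)) => σ * σ = 1 ∧ ∀ i, σ i ≠ i)).filter
          (fun σ => ¬σ 0 = 1)).filter (fun σ => key σ = p)
        = (Finset.univ.filter (fun σ : Equiv.Perm (Fin (2*n+2)) =>
            (σ * σ = 1 ∧ ∀ i, σ i ≠ i) ∧ ∀ a : Fin 4, σ (g4 a) =
              g4 ((Equiv.swap (0:Fin 4) 2 * Equiv.swap 1 3 : Equiv.Perm (Fin 4)) a)))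
          ∪ (Finset.univ.filter (fun σ : Equiv.Perm (Fin (2*n+2)) =>
            (σ * σ = 1 ∧ ∀ i, σ i ≠ i) ∧ ∀ a : Fin 4, σ (g4 a) =
              g4 ((Equiv.swap (0:Fin 4) 3 * Equiv.swap 1 2 : Equiv.Perm (Fin 4)) a))) := by
      rw [Finset.filter_filter, Finset.filter_filter]
      ext σ
      simp only [Finset.mem_filter, Finset.mem_univ, true_and, Finset.mem_union]
      constructor
      · rintro ⟨hP, h01, hkey⟩
        rcases (hiff σ hP).1 ⟨h01, hkey⟩ with h | h
        exacts [Or.inl ⟨hP, h⟩, Or.inr ⟨hP, h⟩]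
      · rintro (⟨hP, h⟩ | ⟨hP, h⟩)
        · have := (hiff σ hP).2 (Or.inl h)
          exact ⟨hP, this.1, this.2⟩
        · have := (hiff σ hP).2 (Or.inr h)
          exact ⟨hP, this.1, this.2⟩
    have hdisjU : Disjoint
        (Finset.univ.filter (fun σ : Equiv.Perm (Fin (2*n+2)) =>
            (σ * σ = 1 ∧ ∀ i, σ i ≠ i) ∧ ∀ a : Fin 4, σ (g4 a) =
              g4 ((Equiv.swap (0:Fin 4) 2 * Equiv.swap 1 3 : Equiv.Perm (Fin 4)) a)))
        (Finset.univ.filter (fun σ : Equiv.Perm (Fin (2*n+2)) =>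
            (σ * σ = 1 ∧ ∀ i, σ i ≠ i) ∧ ∀ a : Fin 4, σ (g4 a) =
              g4 ((Equiv.swap (0:Fin 4) 3 * Equiv.swap 1 2 : Equiv.Perm (Fin 4)) a))) := by
      rw [Finset.disjoint_left]
      intro σ hσ2 hσ3
      simp only [Finset.mem_filter, Finset.mem_univ, true_and] at hσ2 hσ3
      have t2 := hσ2.2 0
      have t3 := hσ3.2 0
      rw [hg0, hπ20, hg2] at t2
      rw [hg0, hπ30, hg3] at t3
      have : p.1 = p.2 := t2.symm.trans t3
      have := congrArg Fin.val this
      omega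
    rw [hsplit, Finset.sum_union hdisjU]
    rw [hafnian_class_sum B (⇑(delFour p.1 p.2 hp1 hp2)) g4 (delFour p.1 p.2 hp1 hp2).strictMono
        hg4mono hdisj2 hcov2 (Equiv.swap (0:Fin 4) 2 * Equiv.swap 1 3) (by decide) (by decide),
      hafnian_class_sum B (⇑(delFour p.1 p.2 hp1 hp2)) g4 (delFour p.1 p.2 hp1 hp2).strictMono
        hg4mono hdisj2 hcov2 (Equiv.swap (0:Fin 4) 3 * Equiv.swap 1 2) (by decide) (by decide)]
    have hfilt2 : Finset.univ.filter (fun a : Fin 4 =>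
        (a : ℕ) < (((Equiv.swap (0:Fin 4) 2 * Equiv.swap 1 3 : Equiv.Perm (Fin 4)) a : Fin 4) : ℕ))
        = ({0, 1} : Finset (Fin 4)) := by
      ext a
      simp only [Finset.mem_filter, Finset.mem_univ, true_and, Finset.mem_insert,
        Finset.mem_singleton]
      revert a
      decide
    have hfilt3 : Finset.univ.filter (fun a : Fin 4 =>
        (a : ℕ) < (((Equiv.swap (0:Fin 4) 3 * Equiv.swap 1 2 : Equiv.Perm (Fin 4)) a : Fin 4) : ℕ))
        = ({0, 1} : Finset (Fin 4)) := by
      ext a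
      simp only [Finset.mem_filter, Finset.mem_univ, true_and, Finset.mem_insert,
        Finset.mem_singleton]
      revert a
      decide
    rw [hfilt2, hfilt3, Finset.prod_insert (by decide), Finset.prod_singleton,
      Finset.prod_insert (by decide), Finset.prod_singleton]
    rw [hπ20, hπ21, hπ30, hπ31, hg0, hg1, hg2, hg3]
    rw [← add_mul]
end
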